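/- Let S be a subset of {0,1}^n containing the zero vector. Then the cuboid of S is a binary clutter if and only if S is closed under coordinatewise addition modulo 2 (i.e., S is a binary vector space). -/

import Mathlib

/-- The member of the cuboid corresponding to a point `p ∈ GF(2)^n`: element `(i, a)` of the
ground set `Fin n × ZMod 2` belongs to it iff `p i = a`. -/
def cubMember {n : ℕ} (p : Fin n → ZMod 2) : Finset (Fin n × ZMod 2) :=
  Finset.univ.filter (fun x => x.2 = p x.1)

/-- The cuboid of a set `S ⊆ {0,1}^n`. -/
def Cuboid {n : ℕ} (S : Finset (Fin n → ZMod 2)) : Finset (Finset (Fin n × ZMod 2)) :=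
  S.image cubMember

/-- A clutter is binary if the symmetric difference of any odd number of members contains
a member. -/
def BinaryClutter {E : Type*} [DecidableEq E] (C : Finset (Finset E)) : Prop :=
  ∀ L : List (Finset E), (∀ A ∈ L, A ∈ C) → Odd L.length →
    ∃ M ∈ C, M ⊆ L.foldr symmDiff ∅

lemma mem_cubMember {n : ℕ} {p : Fin n → ZMod 2} {x : Fin n × ZMod 2} :
    x ∈ cubMember p ↔ x.2 = p x.1 := by
  simp [cubMember]

lemma cub_subset {n : ℕ} {p q : Fin n → ZMod 2} (h : cubMember p ⊆ cubMember q) : p = q := by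
  funext i
  have : ((i, p i) : Fin n × ZMod 2) ∈ cubMember p := mem_cubMember.mpr rfl
  exact mem_cubMember.mp (h this)

lemma fold_mem {n : ℕ} (x : Fin n × ZMod 2) :
    ∀ P : List (Fin n → ZMod 2),
      (x ∈ (P.map cubMember).foldr symmDiff ∅ ↔
        (P.length : ZMod 2) + (P.length : ZMod 2) * x.2 + P.sum x.1 = 1)
  | [] => by simp
  | p :: P => by
    have ih := fold_mem x P
    simp only [List.map_cons, List.foldr_cons, Finset.mem_symmDiff, List.length_cons,
      List.sum_cons, mem_cubMember, ih, Pi.add_apply, Nat.cast_add, Nat.cast_one]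
    generalize p x.1 = A
    generalize x.2 = B
    generalize P.sum x.1 = C
    generalize (P.length : ZMod 2) = D
    revert A B C D
    decide

lemma fold_eq {n : ℕ} {P : List (Fin n → ZMod 2)} (hP : Odd P.length) :
    (P.map cubMember).foldr symmDiff ∅ = cubMember P.sum := by
  have h1 : (P.length : ZMod 2) = 1 := by
    rw [← ZMod.natCast_mod, Nat.odd_iff.mp hP, Nat.cast_one]
  ext x
  rw [fold_mem, mem_cubMember, h1]
  generalize x.2 = B
  generalize P.sum x.1 = C
  revert B C
  decide

lemma listSum_mem {n : ℕ} (S : Finset (Fin n → ZMod 2)) (h0 : (0 : Fin n → ZMod 2) ∈ S)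
    (hcl : ∀ a ∈ S, ∀ b ∈ S, a + b ∈ S) :
    ∀ P : List (Fin n → ZMod 2), (∀ p ∈ P, p ∈ S) → P.sum ∈ S
  | [], _ => by simpa using h0
  | p :: P, h => by
    rw [List.sum_cons]
    exact hcl p (h p List.mem_cons_self) P.sum
      (listSum_mem S h0 hcl P fun q hq => h q (List.mem_cons_of_mem _ hq))

lemma exists_points {n : ℕ} (S : Finset (Fin n → ZMod 2)) :
    ∀ L : List (Finset (Fin n × ZMod 2)), (∀ A ∈ L, A ∈ Cuboid S) →
      ∃ P : List (Fin n → ZMod 2), (∀ p ∈ P, p ∈ S) ∧ P.map cubMember = L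
  | [], _ => ⟨[], by simp, rfl⟩
  | A :: L, h => by
    obtain ⟨P, hP, hmap⟩ := exists_points S L fun B hB => h B (List.mem_cons_of_mem _ hB)
    obtain ⟨p, hp, hpA⟩ := Finset.mem_image.mp (h A List.mem_cons_self)
    exact ⟨p :: P, by
      intro q hq
      rcases List.mem_cons.mp hq with rfl | hq
      · exact hp
      · exact hP q hq, by simp [hpA, hmap]⟩

/-- For `S ⊆ {0,1}^n` containing the zero vector, the cuboid of `S` is a binary
clutter iff `S` is closed under coordinatewise addition mod 2. -/
theorem stmt_4 {n : ℕ} (S : Finset (Fin n → ZMod 2))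
    (h0 : (0 : Fin n → ZMod 2) ∈ S) :
    BinaryClutter (Cuboid S) ↔ ∀ a ∈ S, ∀ b ∈ S, a + b ∈ S := by
  constructor
  · intro h a ha b hb
    have hmem : ∀ A ∈ [cubMember a, cubMember b, cubMember (0 : Fin n → ZMod 2)],
        A ∈ Cuboid S := by
      intro A hA
      simp only [List.mem_cons, List.not_mem_nil, or_false] at hA
      rcases hA with rfl | rfl | rfl
      · exact Finset.mem_image_of_mem _ ha
      · exact Finset.mem_image_of_mem _ hb
      · exact Finset.mem_image_of_mem _ h0
    obtain ⟨M, hM, hsub⟩ := h _ hmem ⟨1, rfl⟩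
    obtain ⟨q, hq, rfl⟩ := Finset.mem_image.mp hM
    have hfold : ([cubMember a, cubMember b, cubMember (0 : Fin n → ZMod 2)]).foldr
        symmDiff ∅ = cubMember ([a, b, 0].sum) := by
      have := fold_eq (P := [a, b, (0 : Fin n → ZMod 2)]) ⟨1, rfl⟩
      simpa using this
    rw [hfold] at hsub
    have : q = [a, b, (0 : Fin n → ZMod 2)].sum := cub_subset hsub
    simpa [this] using hq
  · intro hcl L hL hodd
    obtain ⟨P, hP, hmap⟩ := exists_points S L hL
    have hlen : Odd P.length := by
      rw [← hmap] at hodd; simpa using hodd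
    refine ⟨cubMember P.sum, Finset.mem_image_of_mem _ (listSum_mem S h0 hcl P hP), ?_⟩
    rw [← hmap, fold_eq hlen]
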